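/- For every continuous bilinear form T : ℝⁿ × ℝⁿ → ℝ (with the sup norm on each factor), one has (∑_{i,j=1}^{n} |T(e_i,e_j)|²)^{1/2} ≤ ‖T‖. -/

import Mathlib

noncomputable def stdBasis (n : ℕ) (i : Fin n) : PiLp ⊤ (fun _ : Fin n => ℝ) :=
  (WithLp.equiv ⊤ (∀ _ : Fin n, ℝ)).symm (Pi.single i 1)

noncomputable def sg : Bool → ℝ := fun b => if b then 1 else -1

lemma sg_sq (b : Bool) : sg b * sg b = 1 := by cases b <;> simp [sg]

lemma sg_abs (b : Bool) : |sg b| = 1 := by cases b <;> simp [sg]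

/-- flip equiv -/
def flipAt (n : ℕ) (i : Fin n) : (Fin n → Bool) ≃ (Fin n → Bool) where
  toFun ε := Function.update ε i (!ε i)
  invFun ε := Function.update ε i (!ε i)
  left_inv ε := by
    funext k
    by_cases h : k = i <;> simp [Function.update, h]
  right_inv ε := by
    funext k
    by_cases h : k = i <;> simp [Function.update, h]

lemma orth (n : ℕ) (i j : Fin n) (h : i ≠ j) :
    ∑ ε : Fin n → Bool, sg (ε i) * sg (ε j) = 0 := by
  have key : ∑ ε : Fin n → Bool, sg (ε i) * sg (ε j)
      = ∑ ε : Fin n → Bool, -(sg (ε i) * sg (ε j)) := by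
    rw [← Equiv.sum_comp (flipAt n i) (fun ε => sg (ε i) * sg (ε j))]
    refine Finset.sum_congr rfl fun ε _ => ?_
    have h1 : (flipAt n i ε) i = !ε i := by simp [flipAt]
    have h2 : (flipAt n i ε) j = ε j := by simp [flipAt, Function.update, h.symm]
    rw [h1, h2]
    cases ε i <;> cases ε j <;> simp [sg]
  have := key
  simp only [Finset.sum_neg_distrib] at this
  linarith

lemma khinchin (n : ℕ) (f : Fin n → ℝ) :
    ∑ ε : Fin n → Bool, (∑ i, sg (ε i) * f i) ^ 2
      = 2 ^ n * ∑ i, (f i) ^ 2 := by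
  have expand : ∀ ε : Fin n → Bool, (∑ i, sg (ε i) * f i) ^ 2
      = ∑ i, ∑ j, (sg (ε i) * sg (ε j)) * (f i * f j) := by
    intro ε
    rw [sq, Finset.sum_mul_sum]
    exact Finset.sum_congr rfl fun i _ => Finset.sum_congr rfl fun j _ => by ring
  simp_rw [expand]
  rw [Finset.sum_comm]
  have : ∀ i : Fin n, ∑ ε : Fin n → Bool, ∑ j, (sg (ε i) * sg (ε j)) * (f i * f j)
      = 2 ^ n * (f i) ^ 2 := by
    intro i
    rw [Finset.sum_comm]
    have step : ∀ j : Fin n, ∑ ε : Fin n → Bool, (sg (ε i) * sg (ε j)) * (f i * f j)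
        = if j = i then 2 ^ n * (f i) ^ 2 else 0 := by
      intro j
      rw [← Finset.sum_mul]
      by_cases h : j = i
      · subst h
        simp_rw [sg_sq]
        simp [Finset.card_univ, sq]
      · rw [orth n i j (Ne.symm h), zero_mul]
        simp [h]
    simp_rw [step]
    simp
  simp_rw [this]
  rw [← Finset.mul_sum]

noncomputable def vec (n : ℕ) (ε : Fin n → Bool) : PiLp ⊤ (fun _ : Fin n => ℝ) :=
  (WithLp.equiv ⊤ (∀ _ : Fin n, ℝ)).symm (fun i => sg (ε i))

lemma vec_norm_le (n : ℕ) (ε : Fin n → Bool) : ‖vec n ε‖ ≤ 1 := by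
  rw [PiLp.norm_eq_ciSup]
  exact Real.iSup_le (fun i => by simp [vec, Real.norm_eq_abs, sg_abs]) zero_le_one

lemma vec_eq_sum (n : ℕ) (ε : Fin n → Bool) :
    vec n ε = ∑ i, sg (ε i) • stdBasis n i := by
  ext k
  have : (∑ i, sg (ε i) • stdBasis n i) k = ∑ i, sg (ε i) * (Pi.single i 1 : ∀ _ : Fin n, ℝ) k := by
    rw [WithLp.ofLp_sum, Finset.sum_apply]
    exact Finset.sum_congr rfl fun i _ => by simp [stdBasis, WithLp.equiv_symm_apply, Pi.single_apply]
  rw [this]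
  simp [vec, WithLp.equiv_symm_apply, Pi.single_apply]

lemma T_vec (n : ℕ)
    (T : (PiLp ⊤ fun _ : Fin n => ℝ) →L[ℝ] (PiLp ⊤ fun _ : Fin n => ℝ) →L[ℝ] ℝ)
    (ε : Fin n → Bool) (y : PiLp ⊤ fun _ : Fin n => ℝ) :
    T (vec n ε) y = ∑ i, sg (ε i) * T (stdBasis n i) y := by
  rw [vec_eq_sum, map_sum]
  simp

theorem stmt2 (n : ℕ)
    (T : (PiLp ⊤ fun _ : Fin n => ℝ) →L[ℝ] (PiLp ⊤ fun _ : Fin n => ℝ) →L[ℝ] ℝ) :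
    (∑ i : Fin n, ∑ j : Fin n,
        |T (stdBasis n i) (stdBasis n j)| ^ 2) ^ ((1 : ℝ) / 2) ≤ ‖T‖ := by
  set a : Fin n → Fin n → ℝ := fun i j => T (stdBasis n i) (stdBasis n j) with ha
  -- main averaging identity
  have big : ∑ ε : Fin n → Bool, ∑ δ : Fin n → Bool, (T (vec n ε) (vec n δ)) ^ 2
      = (2 ^ n : ℝ) * ((2 ^ n : ℝ) * ∑ i, ∑ j, (a i j) ^ 2) := by
    have step1 : ∀ ε : Fin n → Bool,
        ∑ δ : Fin n → Bool, (T (vec n ε) (vec n δ)) ^ 2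
          = 2 ^ n * ∑ j, (T (vec n ε) (stdBasis n j)) ^ 2 := by
      intro ε
      have : ∀ δ : Fin n → Bool,
          T (vec n ε) (vec n δ) = ∑ j, sg (δ j) * (T (vec n ε) (stdBasis n j)) := by
        intro δ
        conv_lhs => rw [vec_eq_sum n δ, map_sum]
        simp
      simp_rw [this]
      exact khinchin n _
    simp_rw [step1]
    rw [← Finset.mul_sum, Finset.sum_comm]
    congr 1
    have step2 : ∀ j : Fin n, ∑ ε : Fin n → Bool, (T (vec n ε) (stdBasis n j)) ^ 2
        = 2 ^ n * ∑ i, (a i j) ^ 2 := by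
      intro j
      simp_rw [T_vec]
      exact khinchin n _
    simp_rw [step2]
    rw [Finset.sum_comm, ← Finset.mul_sum]
  have bound : ∑ ε : Fin n → Bool, ∑ δ : Fin n → Bool, (T (vec n ε) (vec n δ)) ^ 2
      ≤ (2 ^ n : ℝ) * ((2 ^ n : ℝ) * ‖T‖ ^ 2) := by
    calc ∑ ε : Fin n → Bool, ∑ δ : Fin n → Bool, (T (vec n ε) (vec n δ)) ^ 2
        ≤ ∑ ε : Fin n → Bool, ∑ δ : Fin n → Bool, ‖T‖ ^ 2 := by
          refine Finset.sum_le_sum fun ε _ => Finset.sum_le_sum fun δ _ => ?_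
          have h1 : |T (vec n ε) (vec n δ)| ≤ ‖T‖ := by
            have := T.le_opNorm₂ (vec n ε) (vec n δ)
            have h2 := vec_norm_le n ε
            have h3 := vec_norm_le n δ
            have hT : (0:ℝ) ≤ ‖T‖ := ContinuousLinearMap.opNorm_nonneg T
            rw [Real.norm_eq_abs] at this
            have h4 : ‖T‖ * ‖vec n ε‖ * ‖vec n δ‖ ≤ ‖T‖ * 1 * 1 := by
              gcongr
            rw [mul_one, mul_one] at h4
            linarith
          calc (T (vec n ε) (vec n δ)) ^ 2 = |T (vec n ε) (vec n δ)| ^ 2 := (sq_abs _).symm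
            _ ≤ ‖T‖ ^ 2 := pow_le_pow_left₀ (abs_nonneg _) h1 2
      _ = (2 ^ n : ℝ) * ((2 ^ n : ℝ) * ‖T‖ ^ 2) := by
          simp [Finset.card_univ]
  rw [big] at bound
  have hpos : (0:ℝ) < 2 ^ n := by positivity
  have key : ∑ i, ∑ j, (a i j) ^ 2 ≤ ‖T‖ ^ 2 := by
    have := mul_le_mul_iff_right₀ hpos |>.mp (mul_le_mul_iff_right₀ hpos |>.mp bound)
    exact this
  have habs : ∑ i : Fin n, ∑ j : Fin n, |a i j| ^ 2 = ∑ i, ∑ j, (a i j) ^ 2 := by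
    simp [sq_abs]
  rw [habs]
  calc (∑ i, ∑ j, (a i j) ^ 2) ^ ((1:ℝ)/2)
      ≤ (‖T‖ ^ 2) ^ ((1:ℝ)/2) := by
        apply Real.rpow_le_rpow (by positivity) key (by norm_num)
    _ = ‖T‖ := by
        rw [← Real.rpow_natCast ‖T‖ 2, ← Real.rpow_mul (ContinuousLinearMap.opNorm_nonneg T)]
        norm_num
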